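/- arXiv:2004.00453 — 4 statements merged into one kernel-verified Lean document; each statement's English description precedes it below -/
import Mathlib

section
/- Let S = [[0, −1], [0, 1]] and T = [[0, 1], [0, 1]] in M₂(ℂ). Then S*T = 0 but S is not numerical-radius Birkhoff orthogonal to T; indeed ω(S) = (1+√2)/2 > 1 = ω(S − T). -/
open Filter Topology

/-- Numerical radius of a 2×2 complex matrix (w.r.t. the standard inner product). -/
noncomputable def numRad2 (A : Matrix (Fin 2) (Fin 2) ℂ) : ℝ :=
  sSup {r : ℝ | ∃ x : EuclideanSpace ℂ (Fin 2), ‖x‖ = 1 ∧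
    r = ‖(inner ℂ x ((WithLp.equiv 2 (Fin 2 → ℂ)).symm (A.mulVec x)) : ℂ)‖}

/-- Numerical radius Birkhoff orthogonality for 2×2 matrices. -/
def wBOrth2 (A B : Matrix (Fin 2) (Fin 2) ℂ) : Prop :=
  ∀ lam : ℂ, numRad2 A ≤ numRad2 (A + lam • B)

lemma val_eq (A : Matrix (Fin 2) (Fin 2) ℂ) (x : EuclideanSpace ℂ (Fin 2)) :
    (inner ℂ x ((WithLp.equiv 2 (Fin 2 → ℂ)).symm (A.mulVec x)) : ℂ)
      = (starRingEnd ℂ) (x 0) * (A 0 0 * x 0 + A 0 1 * x 1)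
        + (starRingEnd ℂ) (x 1) * (A 1 0 * x 0 + A 1 1 * x 1) := by
  simp [PiLp.inner_apply, Matrix.mulVec, dotProduct, Fin.sum_univ_two, mul_comm]

lemma apply_mk (a b : ℂ) (i : Fin 2) :
    ((WithLp.equiv 2 (Fin 2 → ℂ)).symm ![a,b] : EuclideanSpace ℂ (Fin 2)) i = ![a,b] i := rfl

lemma norm_sq_one (x : EuclideanSpace ℂ (Fin 2)) (h : ‖x‖ = 1) :
    ‖x 0‖^2 + ‖x 1‖^2 = 1 := by
  have h1 := EuclideanSpace.norm_eq x
  rw [h] at h1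
  have h2 : Real.sqrt (∑ i : Fin 2, ‖x i‖^2) = 1 := h1.symm
  have := Real.sqrt_eq_one.mp h2
  simpa [Fin.sum_univ_two] using this

lemma key_ineq (u v : ℝ) (h : u^2 + v^2 = 1) :
    u*v + v^2 ≤ (1 + Real.sqrt 2)/2 := by
  have hs : Real.sqrt 2 ^ 2 = 2 := Real.sq_sqrt (by norm_num)
  have h1 : (1:ℝ) ≤ Real.sqrt 2 := by nlinarith [Real.sqrt_nonneg 2]
  nlinarith [sq_nonneg (2*u*v - v^2 + u^2), sq_nonneg (2*u*v + v^2 - u^2 - Real.sqrt 2),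
    Real.sqrt_nonneg 2]

lemma isGreatest_ST : IsGreatest {r : ℝ | ∃ x : EuclideanSpace ℂ (Fin 2), ‖x‖ = 1 ∧
    r = ‖(inner ℂ x ((WithLp.equiv 2 (Fin 2 → ℂ)).symm
      ((!![0,-2;0,0] : Matrix (Fin 2) (Fin 2) ℂ).mulVec x)) : ℂ)‖} 1 := by
  constructor
  · refine ⟨(WithLp.equiv 2 (Fin 2 → ℂ)).symm
      ![((Real.sqrt 2 / 2 : ℝ) : ℂ), ((Real.sqrt 2 / 2 : ℝ) : ℂ)], ?_, ?_⟩
    · rw [EuclideanSpace.norm_eq]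
      have hs : Real.sqrt 2 ^ 2 = 2 := Real.sq_sqrt (by norm_num)
      simp only [apply_mk]
      norm_num [Fin.sum_univ_two, Complex.norm_real, abs_of_nonneg (Real.sqrt_nonneg 2)]
      nlinarith
    · rw [val_eq]
      norm_num [apply_mk, Complex.conj_ofReal]
      rw [abs_of_nonneg (Real.sqrt_nonneg 2)]
      nlinarith [Real.sq_sqrt (by norm_num : (0:ℝ) ≤ 2)]
  · rintro r ⟨x, hx, rfl⟩
    rw [val_eq]
    have hn := norm_sq_one x hx
    have he : (starRingEnd ℂ) (x 0) * ((!![0,-2;0,0] : Matrix (Fin 2) (Fin 2) ℂ) 0 0 * x 0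
          + (!![0,-2;0,0] : Matrix (Fin 2) (Fin 2) ℂ) 0 1 * x 1)
        + (starRingEnd ℂ) (x 1) * ((!![0,-2;0,0] : Matrix (Fin 2) (Fin 2) ℂ) 1 0 * x 0
          + (!![0,-2;0,0] : Matrix (Fin 2) (Fin 2) ℂ) 1 1 * x 1)
        = -2 * ((starRingEnd ℂ) (x 0) * x 1) := by
      norm_num; ring
    rw [he]
    have hnorm : ‖(-2 : ℂ) * ((starRingEnd ℂ) (x 0) * x 1)‖ = 2 * (‖x 0‖ * ‖x 1‖) := by
      rw [norm_mul, norm_mul, RCLike.norm_conj]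
      norm_num
    rw [hnorm]
    nlinarith [sq_nonneg (‖x 0‖ - ‖x 1‖), norm_nonneg (x 0), norm_nonneg (x 1)]

lemma numRad2_ST : numRad2 !![0,-2;0,0] = 1 := isGreatest_ST.csSup_eq

lemma sqrt_facts : Real.sqrt (2 - Real.sqrt 2) * Real.sqrt (2 + Real.sqrt 2) = Real.sqrt 2 := by
  have h2 : Real.sqrt 2 ^ 2 = 2 := Real.sq_sqrt (by norm_num)
  have hle : Real.sqrt 2 ≤ 2 := by nlinarith [Real.sqrt_nonneg 2]
  rw [← Real.sqrt_mul (by linarith)]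
  congr 1
  nlinarith

lemma isGreatest_S : IsGreatest {r : ℝ | ∃ x : EuclideanSpace ℂ (Fin 2), ‖x‖ = 1 ∧
    r = ‖(inner ℂ x ((WithLp.equiv 2 (Fin 2 → ℂ)).symm
      ((!![0,-1;0,1] : Matrix (Fin 2) (Fin 2) ℂ).mulVec x)) : ℂ)‖} ((1 + Real.sqrt 2)/2) := by
  have h2 : Real.sqrt 2 ^ 2 = 2 := Real.sq_sqrt (by norm_num)
  have h0 : (0:ℝ) ≤ Real.sqrt 2 := Real.sqrt_nonneg 2
  have hle : Real.sqrt 2 ≤ 2 := by nlinarith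
  have hrsq : Real.sqrt (2 - Real.sqrt 2) ^ 2 = 2 - Real.sqrt 2 := Real.sq_sqrt (by linarith)
  have hssq : Real.sqrt (2 + Real.sqrt 2) ^ 2 = 2 + Real.sqrt 2 := Real.sq_sqrt (by linarith)
  have hrs := sqrt_facts
  have hr0 : (0:ℝ) ≤ Real.sqrt (2 - Real.sqrt 2) := Real.sqrt_nonneg _
  have hs0 : (0:ℝ) ≤ Real.sqrt (2 + Real.sqrt 2) := Real.sqrt_nonneg _
  constructor
  · refine ⟨(WithLp.equiv 2 (Fin 2 → ℂ)).symm
      ![((-(Real.sqrt (2 - Real.sqrt 2) / 2) : ℝ) : ℂ),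
        ((Real.sqrt (2 + Real.sqrt 2) / 2 : ℝ) : ℂ)], ?_, ?_⟩
    · rw [EuclideanSpace.norm_eq]
      simp only [apply_mk]
      norm_num [Fin.sum_univ_two, Complex.norm_real]
      rw [abs_of_nonneg hr0, abs_of_nonneg hs0]
      nlinarith
    · rw [val_eq]
      norm_num [apply_mk, Complex.conj_ofReal]
      have he : ((Real.sqrt (2 - Real.sqrt 2) : ℂ) / (starRingEnd ℂ) 2 *
            ((Real.sqrt (2 + Real.sqrt 2) : ℂ) / 2)
          + (Real.sqrt (2 + Real.sqrt 2) : ℂ) / (starRingEnd ℂ) 2 *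
            ((Real.sqrt (2 + Real.sqrt 2) : ℂ) / 2))
          = ((Real.sqrt (2 - Real.sqrt 2) * Real.sqrt (2 + Real.sqrt 2) / 4
              + Real.sqrt (2 + Real.sqrt 2) ^ 2 / 4 : ℝ) : ℂ) := by
        rw [show ((starRingEnd ℂ) 2 : ℂ) = 2 from map_ofNat _ 2]
        push_cast
        ring
      rw [he, Complex.norm_real, Real.norm_eq_abs, abs_of_nonneg (by positivity), hrs, hssq]
      ring
  · rintro r ⟨x, hx, rfl⟩
    rw [val_eq]
    have hn := norm_sq_one x hx
    have he : (starRingEnd ℂ) (x 0) * ((!![0,-1;0,1] : Matrix (Fin 2) (Fin 2) ℂ) 0 0 * x 0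
          + (!![0,-1;0,1] : Matrix (Fin 2) (Fin 2) ℂ) 0 1 * x 1)
        + (starRingEnd ℂ) (x 1) * ((!![0,-1;0,1] : Matrix (Fin 2) (Fin 2) ℂ) 1 0 * x 0
          + (!![0,-1;0,1] : Matrix (Fin 2) (Fin 2) ℂ) 1 1 * x 1)
        = -((starRingEnd ℂ) (x 0) * x 1) + (starRingEnd ℂ) (x 1) * x 1 := by
      norm_num; try ring
    rw [he]
    calc ‖-((starRingEnd ℂ) (x 0) * x 1) + (starRingEnd ℂ) (x 1) * x 1‖
        ≤ ‖-((starRingEnd ℂ) (x 0) * x 1)‖ + ‖(starRingEnd ℂ) (x 1) * x 1‖ := norm_add_le _ _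
      _ = ‖x 0‖ * ‖x 1‖ + ‖x 1‖ ^ 2 := by
          rw [norm_neg, norm_mul, norm_mul, RCLike.norm_conj, RCLike.norm_conj, sq]
      _ ≤ (1 + Real.sqrt 2)/2 := key_ineq _ _ hn

lemma numRad2_S : numRad2 !![0,-1;0,1] = (1 + Real.sqrt 2)/2 := isGreatest_S.csSup_eq

theorem stmt_6 :
    let S : Matrix (Fin 2) (Fin 2) ℂ := !![0, -1; 0, 1]
    let T : Matrix (Fin 2) (Fin 2) ℂ := !![0, 1; 0, 1]
    S.conjTranspose * T = 0 ∧ ¬ wBOrth2 S T ∧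
      numRad2 S = (1 + Real.sqrt 2) / 2 ∧ numRad2 (S - T) = 1 ∧
      numRad2 (S - T) < numRad2 S := by
  intro S T
  have hS : S = !![0, -1; 0, 1] := rfl
  have hT : T = !![0, 1; 0, 1] := rfl
  have hsub : S - T = !![0,-2;0,0] := by
    rw [hS, hT]
    ext i j
    fin_cases i <;> fin_cases j <;> norm_num
  have hlt : numRad2 (S - T) < numRad2 S := by
    rw [hsub, hS, numRad2_ST, numRad2_S]
    have h2 : Real.sqrt 2 ^ 2 = 2 := Real.sq_sqrt (by norm_num)
    nlinarith [Real.sqrt_nonneg 2]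
  refine ⟨?_, ?_, by rw [hS, numRad2_S], by rw [hsub, numRad2_ST], hlt⟩
  · rw [hS, hT]
    ext i j
    fin_cases i <;> fin_cases j <;>
      simp [Matrix.mul_apply, Matrix.conjTranspose_apply, Fin.sum_univ_two]
  · intro hw
    have := hw (-1)
    rw [neg_one_smul, ← sub_eq_add_neg] at this
    exact absurd this (not_le.mpr hlt)
end

section
/- Let T = [[1, 0], [0, 0]] and S = [[0, 1], [0, −1]] in M₂(ℂ). Then T ⊥_{ωB} S but S is not ⊥_{ωB} T; in particular ω(S + T) = √5/2 < (1+√2)/2 = ω(S). Hence numerical radius Birkhoff orthogonality is not symmetric. -/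
open Filter Topology

open ComplexConjugate

noncomputable def vec2 (a b : ℂ) : EuclideanSpace ℂ (Fin 2) :=
  (WithLp.equiv 2 (Fin 2 → ℂ)).symm ![a, b]

lemma vec2_apply0 (a b : ℂ) : vec2 a b 0 = a := rfl
lemma vec2_apply1 (a b : ℂ) : vec2 a b 1 = b := rfl

lemma vec2_norm (a b : ℂ) : ‖vec2 a b‖ = Real.sqrt (‖a‖^2 + ‖b‖^2) := by
  rw [EuclideanSpace.norm_eq]
  simp [Fin.sum_univ_two, vec2]

lemma inner_formula (A : Matrix (Fin 2) (Fin 2) ℂ) (x : EuclideanSpace ℂ (Fin 2)) :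
    (inner ℂ x ((WithLp.equiv 2 (Fin 2 → ℂ)).symm (A.mulVec x)) : ℂ)
    = conj (x 0) * (A 0 0 * x 0 + A 0 1 * x 1) + conj (x 1) * (A 1 0 * x 0 + A 1 1 * x 1) := by
  simp [PiLp.inner_apply, Matrix.mulVec, dotProduct, Fin.sum_univ_two, RCLike.inner_apply,
    mul_comm]

noncomputable def nrSet (A : Matrix (Fin 2) (Fin 2) ℂ) : Set ℝ :=
  {r : ℝ | ∃ x : EuclideanSpace ℂ (Fin 2), ‖x‖ = 1 ∧
    r = ‖(inner ℂ x ((WithLp.equiv 2 (Fin 2 → ℂ)).symm (A.mulVec x)) : ℂ)‖}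

lemma numRad2_eq (A : Matrix (Fin 2) (Fin 2) ℂ) : numRad2 A = sSup (nrSet A) := rfl

lemma mem_nrSet (A : Matrix (Fin 2) (Fin 2) ℂ) (a b : ℂ) (h : ‖a‖^2 + ‖b‖^2 = 1) :
    ‖conj a * (A 0 0 * a + A 0 1 * b) + conj b * (A 1 0 * a + A 1 1 * b)‖ ∈ nrSet A := by
  refine ⟨vec2 a b, ?_, ?_⟩
  · rw [vec2_norm, h, Real.sqrt_one]
  · rw [inner_formula, vec2_apply0, vec2_apply1]

lemma nrSet_nonempty (A : Matrix (Fin 2) (Fin 2) ℂ) : (nrSet A).Nonempty :=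
  ⟨_, mem_nrSet A 1 0 (by simp)⟩

lemma nrSet_bddAbove (A : Matrix (Fin 2) (Fin 2) ℂ) :
    BddAbove (nrSet A) := by
  refine ⟨‖A 0 0‖ + ‖A 0 1‖ + ‖A 1 0‖ + ‖A 1 1‖, fun r hr => ?_⟩
  obtain ⟨x, hx, rfl⟩ := hr
  rw [inner_formula]
  have hx2 : ‖x 0‖^2 + ‖x 1‖^2 = 1 := by
    have := EuclideanSpace.norm_eq x
    rw [hx] at this
    have h2 : Real.sqrt (∑ i, ‖x i‖^2) = 1 := this.symm
    have := Real.sqrt_eq_one.mp h2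
    simpa [Fin.sum_univ_two] using this
  have h0 : ‖x 0‖ ≤ 1 := by nlinarith [sq_nonneg ‖x 1‖, norm_nonneg (x 0)]
  have h1 : ‖x 1‖ ≤ 1 := by nlinarith [sq_nonneg ‖x 0‖, norm_nonneg (x 1)]
  calc ‖conj (x 0) * (A 0 0 * x 0 + A 0 1 * x 1) + conj (x 1) * (A 1 0 * x 0 + A 1 1 * x 1)‖
      ≤ ‖conj (x 0)‖ * (‖A 0 0‖ * ‖x 0‖ + ‖A 0 1‖ * ‖x 1‖)
        + ‖conj (x 1)‖ * (‖A 1 0‖ * ‖x 0‖ + ‖A 1 1‖ * ‖x 1‖) := by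
        refine (norm_add_le _ _).trans (add_le_add ?_ ?_) <;>
          · rw [norm_mul]
            gcongr
            exact (norm_add_le _ _).trans (by rw [norm_mul, norm_mul])
    _ ≤ _ := by
        simp only [RCLike.norm_conj]
        have hpq : ‖x 0‖ * ‖x 1‖ ≤ 1 := mul_le_one₀ h0 (norm_nonneg _) h1
        have hpp : ‖x 0‖ * ‖x 0‖ ≤ 1 := mul_le_one₀ h0 (norm_nonneg _) h0
        have hqq : ‖x 1‖ * ‖x 1‖ ≤ 1 := mul_le_one₀ h1 (norm_nonneg _) h1
        nlinarith [norm_nonneg (A 0 0), norm_nonneg (A 0 1), norm_nonneg (A 1 0),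
          norm_nonneg (A 1 1)]

lemma le_numRad2' (A : Matrix (Fin 2) (Fin 2) ℂ) (a b : ℂ) (h : ‖a‖^2 + ‖b‖^2 = 1) :
    ‖conj a * (A 0 0 * a + A 0 1 * b) + conj b * (A 1 0 * a + A 1 1 * b)‖ ≤ numRad2 A :=
  le_csSup (nrSet_bddAbove A) (mem_nrSet A a b h)

lemma numRad2_le' (A : Matrix (Fin 2) (Fin 2) ℂ) (c : ℝ)
    (h : ∀ a b : ℂ, ‖a‖^2 + ‖b‖^2 = 1 →
      ‖conj a * (A 0 0 * a + A 0 1 * b) + conj b * (A 1 0 * a + A 1 1 * b)‖ ≤ c) :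
    numRad2 A ≤ c := by
  refine csSup_le (nrSet_nonempty A) fun r hr => ?_
  obtain ⟨x, hx, rfl⟩ := hr
  rw [inner_formula]
  refine h _ _ ?_
  have := EuclideanSpace.norm_eq x
  rw [hx] at this
  have h2 := Real.sqrt_eq_one.mp this.symm
  simpa [Fin.sum_univ_two] using h2

lemma conj_mul_self (a : ℂ) : conj a * a = ((‖a‖^2 : ℝ) : ℂ) := by
  rw [mul_comm, Complex.mul_conj, Complex.normSq_eq_norm_sq]

lemma sqrt2_le_two : Real.sqrt 2 ≤ 2 := by
  nlinarith [Real.sq_sqrt (show (0:ℝ) ≤ 2 by norm_num), Real.sqrt_nonneg 2]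

lemma two_sqrt5_le_five : 2 * Real.sqrt 5 ≤ 5 := by
  nlinarith [Real.sq_sqrt (show (0:ℝ) ≤ 5 by norm_num), Real.sqrt_nonneg 5]

lemma arithS (p q : ℝ) (h : p^2 + q^2 = 1) :
    p*q + q^2 ≤ (1 + Real.sqrt 2)/2 := by
  have : 2*p*q + q^2 - p^2 ≤ Real.sqrt 2 := by
    apply Real.le_sqrt_of_sq_le
    nlinarith [sq_nonneg (2*p*q - (q^2 - p^2))]
  linarith

lemma arithST (p q : ℝ) (hp : 0 ≤ p) (hq : 0 ≤ q) (h : p^2 + q^2 = 1) :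
    |p^2 - q^2| + p*q ≤ Real.sqrt 5 / 2 := by
  have : 2*|p^2-q^2| + 2*p*q ≤ Real.sqrt 5 := by
    apply Real.le_sqrt_of_sq_le
    have h1 : |p^2-q^2|^2 = (p^2-q^2)^2 := sq_abs _
    nlinarith [sq_nonneg (|p^2-q^2| - 4*p*q), abs_nonneg (p^2-q^2), mul_nonneg hp hq]
  linarith

lemma sqrt_prod_S :
    Real.sqrt ((2-Real.sqrt 2)/4) * Real.sqrt ((2+Real.sqrt 2)/4) = Real.sqrt 2 / 4 := by
  rw [← Real.sqrt_mul (by nlinarith [sqrt2_le_two, Real.sqrt_nonneg 2])]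
  rw [show ((2-Real.sqrt 2)/4) * ((2+Real.sqrt 2)/4) = (Real.sqrt 2/4)^2 by
    nlinarith [Real.sq_sqrt (show (0:ℝ) ≤ 2 by norm_num)]]
  exact Real.sqrt_sq (by positivity)

lemma sqrt_prod_ST :
    Real.sqrt ((5+2*Real.sqrt 5)/10) * Real.sqrt ((5-2*Real.sqrt 5)/10) = Real.sqrt 5 / 10 := by
  rw [← Real.sqrt_mul (by nlinarith [two_sqrt5_le_five, Real.sqrt_nonneg 5])]
  rw [show ((5+2*Real.sqrt 5)/10) * ((5-2*Real.sqrt 5)/10) = (Real.sqrt 5/10)^2 by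
    nlinarith [Real.sq_sqrt (show (0:ℝ) ≤ 5 by norm_num)]]
  exact Real.sqrt_sq (by positivity)

lemma sqrt5_lt : Real.sqrt 5 / 2 < (1 + Real.sqrt 2)/2 := by
  have h2 : (1:ℝ) < Real.sqrt 2 := by
    nlinarith [Real.sq_sqrt (show (0:ℝ) ≤ 2 by norm_num), Real.sqrt_nonneg 2,
      sq_nonneg (Real.sqrt 2 - 1)]
  have h5 : Real.sqrt 5 < 1 + Real.sqrt 2 := by
    nlinarith [Real.sq_sqrt (show (0:ℝ) ≤ 5 by norm_num), Real.sq_sqrt (show (0:ℝ) ≤ 2 by norm_num),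
      Real.sqrt_nonneg 5, Real.sqrt_nonneg 2]
  linarith

lemma numRadS : numRad2 (!![0, 1; 0, -1] : Matrix (Fin 2) (Fin 2) ℂ) = (1 + Real.sqrt 2) / 2 := by
  set A : Matrix (Fin 2) (Fin 2) ℂ := !![0, 1; 0, -1] with hA
  have e00 : A 0 0 = 0 := by simp [hA]
  have e01 : A 0 1 = 1 := by simp [hA]
  have e10 : A 1 0 = 0 := by simp [hA]
  have e11 : A 1 1 = -1 := by simp [hA]
  refine le_antisymm (numRad2_le' A _ fun a b hab => ?_) ?_
  · rw [e00, e01, e10, e11]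
    calc ‖conj a * ((0:ℂ) * a + 1 * b) + conj b * ((0:ℂ) * a + (-1) * b)‖
        = ‖conj a * b + (-(conj b * b))‖ := by ring_nf
      _ ≤ ‖conj a * b‖ + ‖-(conj b * b)‖ := norm_add_le _ _
      _ = ‖a‖ * ‖b‖ + ‖b‖ * ‖b‖ := by
          rw [norm_neg, norm_mul, norm_mul, RCLike.norm_conj, RCLike.norm_conj]
      _ ≤ (1 + Real.sqrt 2)/2 := by
          have := arithS ‖a‖ ‖b‖ hab
          nlinarith
  · set u := Real.sqrt ((2-Real.sqrt 2)/4) with hu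
    set v := Real.sqrt ((2+Real.sqrt 2)/4) with hv
    have hun : 0 ≤ u := Real.sqrt_nonneg _
    have hvn : 0 ≤ v := Real.sqrt_nonneg _
    have hu2 : u^2 = (2-Real.sqrt 2)/4 :=
      Real.sq_sqrt (by nlinarith [sqrt2_le_two, Real.sqrt_nonneg 2])
    have hv2 : v^2 = (2+Real.sqrt 2)/4 :=
      Real.sq_sqrt (by nlinarith [Real.sqrt_nonneg 2])
    have hone : ‖((u:ℂ))‖^2 + ‖(-(v:ℂ))‖^2 = 1 := by
      rw [norm_neg, Complex.norm_real, Complex.norm_real, Real.norm_eq_abs, Real.norm_eq_abs,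
        sq_abs, sq_abs, hu2, hv2]
      ring
    have key := le_numRad2' A ((u:ℂ)) (-(v:ℂ)) hone
    rw [e00, e01, e10, e11] at key
    have hval : ‖conj ((u:ℂ)) * ((0:ℂ) * u + 1 * (-(v:ℂ)))
        + conj (-(v:ℂ)) * ((0:ℂ) * u + (-1) * (-(v:ℂ)))‖ = (1 + Real.sqrt 2)/2 := by
      have heq : conj ((u:ℂ)) * ((0:ℂ) * u + 1 * (-(v:ℂ)))
          + conj (-(v:ℂ)) * ((0:ℂ) * u + (-1) * (-(v:ℂ)))
          = ((-(u*v + v^2) : ℝ) : ℂ) := by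
        push_cast
        simp [Complex.conj_ofReal]
        ring
      rw [heq, Complex.norm_real, Real.norm_eq_abs, abs_neg, abs_of_nonneg (by positivity)]
      rw [← hu, ← hv] at *
      rw [show u * v = Real.sqrt 2 / 4 from by rw [hu, hv]; exact sqrt_prod_S, hv2]
      ring
    rw [hval] at key
    exact key

lemma numRadST :
    numRad2 ((!![0, 1; 0, -1] : Matrix (Fin 2) (Fin 2) ℂ) + !![1, 0; 0, 0])
      = Real.sqrt 5 / 2 := by
  set A : Matrix (Fin 2) (Fin 2) ℂ := !![0, 1; 0, -1] + !![1, 0; 0, 0] with hA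
  have e00 : A 0 0 = 1 := by simp [hA]
  have e01 : A 0 1 = 1 := by simp [hA]
  have e10 : A 1 0 = 0 := by simp [hA]
  have e11 : A 1 1 = -1 := by simp [hA]
  refine le_antisymm (numRad2_le' A _ fun a b hab => ?_) ?_
  · rw [e00, e01, e10, e11]
    calc ‖conj a * ((1:ℂ) * a + 1 * b) + conj b * ((0:ℂ) * a + (-1) * b)‖
        = ‖((‖a‖^2 - ‖b‖^2 : ℝ) : ℂ) + conj a * b‖ := by
          congr 1
          have h1 := conj_mul_self a
          have h2 := conj_mul_self b
          push_cast at h1 h2 ⊢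
          linear_combination h1 - h2
      _ ≤ ‖((‖a‖^2 - ‖b‖^2 : ℝ) : ℂ)‖ + ‖conj a * b‖ := norm_add_le _ _
      _ = |‖a‖^2 - ‖b‖^2| + ‖a‖ * ‖b‖ := by
          rw [Complex.norm_real, Real.norm_eq_abs, norm_mul, RCLike.norm_conj]
      _ ≤ Real.sqrt 5 / 2 := arithST ‖a‖ ‖b‖ (norm_nonneg a) (norm_nonneg b) hab
  · set u := Real.sqrt ((5+2*Real.sqrt 5)/10) with hu
    set v := Real.sqrt ((5-2*Real.sqrt 5)/10) with hv
    have hun : 0 ≤ u := Real.sqrt_nonneg _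
    have hvn : 0 ≤ v := Real.sqrt_nonneg _
    have hu2 : u^2 = (5+2*Real.sqrt 5)/10 :=
      Real.sq_sqrt (by nlinarith [Real.sqrt_nonneg 5])
    have hv2 : v^2 = (5-2*Real.sqrt 5)/10 :=
      Real.sq_sqrt (by nlinarith [two_sqrt5_le_five])
    have hone : ‖((u:ℂ))‖^2 + ‖((v:ℂ))‖^2 = 1 := by
      rw [Complex.norm_real, Complex.norm_real, Real.norm_eq_abs, Real.norm_eq_abs,
        sq_abs, sq_abs, hu2, hv2]
      ring
    have key := le_numRad2' A ((u:ℂ)) ((v:ℂ)) hone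
    rw [e00, e01, e10, e11] at key
    have hval : ‖conj ((u:ℂ)) * ((1:ℂ) * u + 1 * (v:ℂ))
        + conj ((v:ℂ)) * ((0:ℂ) * u + (-1) * (v:ℂ))‖ = Real.sqrt 5 / 2 := by
      have heq : conj ((u:ℂ)) * ((1:ℂ) * u + 1 * (v:ℂ))
          + conj ((v:ℂ)) * ((0:ℂ) * u + (-1) * (v:ℂ))
          = ((u^2 + u*v - v^2 : ℝ) : ℂ) := by
        push_cast
        simp [Complex.conj_ofReal]
        ring
      rw [heq, Complex.norm_real, Real.norm_eq_abs]
      rw [show u * v = Real.sqrt 5 / 10 from by rw [hu, hv]; exact sqrt_prod_ST, hu2, hv2]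
      rw [abs_of_nonneg (by nlinarith [Real.sqrt_nonneg 5])]
      ring
    rw [hval] at key
    exact key

lemma numRadT_le : numRad2 (!![1, 0; 0, 0] : Matrix (Fin 2) (Fin 2) ℂ) ≤ 1 := by
  refine numRad2_le' _ _ fun a b hab => ?_
  have e00 : (!![1, 0; 0, 0] : Matrix (Fin 2) (Fin 2) ℂ) 0 0 = 1 := by simp
  have e01 : (!![1, 0; 0, 0] : Matrix (Fin 2) (Fin 2) ℂ) 0 1 = 0 := by simp
  have e10 : (!![1, 0; 0, 0] : Matrix (Fin 2) (Fin 2) ℂ) 1 0 = 0 := by simp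
  have e11 : (!![1, 0; 0, 0] : Matrix (Fin 2) (Fin 2) ℂ) 1 1 = 0 := by simp
  rw [e00, e01, e10, e11]
  have : conj a * ((1:ℂ) * a + 0 * b) + conj b * ((0:ℂ) * a + 0 * b) = conj a * a := by ring
  rw [this, conj_mul_self, Complex.norm_real, Real.norm_eq_abs, abs_of_nonneg (by positivity)]
  nlinarith [sq_nonneg ‖b‖]

lemma one_le_numRadTS (lam : ℂ) :
    1 ≤ numRad2 ((!![1, 0; 0, 0] : Matrix (Fin 2) (Fin 2) ℂ) + lam • !![0, 1; 0, -1]) := by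
  set A : Matrix (Fin 2) (Fin 2) ℂ := !![1, 0; 0, 0] + lam • !![0, 1; 0, -1] with hA
  have e00 : A 0 0 = 1 := by simp [hA]
  have e10 : A 1 0 = 0 := by simp [hA]
  have key := le_numRad2' A 1 0 (by simp)
  have hval : ‖conj (1:ℂ) * (A 0 0 * 1 + A 0 1 * 0) + conj (0:ℂ) * (A 1 0 * 1 + A 1 1 * 0)‖
      = 1 := by
    rw [e00]
    simp
  rw [hval] at key
  exact key

theorem stmt_7 :
    let T : Matrix (Fin 2) (Fin 2) ℂ := !![1, 0; 0, 0]
    let S : Matrix (Fin 2) (Fin 2) ℂ := !![0, 1; 0, -1]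
    wBOrth2 T S ∧ ¬ wBOrth2 S T ∧
      numRad2 (S + T) = Real.sqrt 5 / 2 ∧ numRad2 S = (1 + Real.sqrt 2) / 2 ∧
      numRad2 (S + T) < numRad2 S := by
  intro T S
  have hST : numRad2 (S + T) = Real.sqrt 5 / 2 := numRadST
  have hS : numRad2 S = (1 + Real.sqrt 2) / 2 := numRadS
  refine ⟨fun lam => (numRadT_le).trans (one_le_numRadTS lam), ?_, hST, hS, ?_⟩
  · intro h
    have := h 1
    rw [one_smul] at this
    rw [hST, hS] at this
    exact absurd this (not_le.mpr sqrt5_lt)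
  · rw [hST, hS]
    exact sqrt5_lt
end

section
/- If T ⊥_{ωB} I (the identity operator), then I ⊥_{ωB} T. -/
open Filter Topology ComplexOrder

variable {H : Type*} [NormedAddCommGroup H] [InnerProductSpace ℂ H] [CompleteSpace H]

/-- The numerical radius of a bounded operator `T`:
`ω(T) = sup {|⟨Tx, x⟩| : ‖x‖ = 1}`. -/
noncomputable def numRad (T : H →L[ℂ] H) : ℝ :=
  sSup {r : ℝ | ∃ x : H, ‖x‖ = 1 ∧ r = ‖(inner ℂ x (T x) : ℂ)‖}

/-- Numerical radius Birkhoff orthogonality: `ω(T + λS) ≥ ω(T)` for all `λ ∈ ℂ`. -/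
def wBOrth (T S : H →L[ℂ] H) : Prop :=
  ∀ lam : ℂ, numRad T ≤ numRad (T + lam • S)

lemma nrSet_bdd (T : H →L[ℂ] H) :
    BddAbove {r : ℝ | ∃ x : H, ‖x‖ = 1 ∧ r = ‖(inner ℂ x (T x) : ℂ)‖} := by
  refine ⟨‖T‖, ?_⟩
  rintro r ⟨x, hx, rfl⟩
  calc ‖(inner ℂ x (T x) : ℂ)‖ ≤ ‖x‖ * ‖T x‖ := norm_inner_le_norm _ _
    _ ≤ ‖x‖ * (‖T‖ * ‖x‖) := by gcongr; exact T.le_opNorm x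
    _ = ‖T‖ := by rw [hx]; ring

lemma le_numRad (T : H →L[ℂ] H) {x : H} (hx : ‖x‖ = 1) :
    ‖(inner ℂ x (T x) : ℂ)‖ ≤ numRad T :=
  le_csSup (nrSet_bdd T) ⟨x, hx, rfl⟩

lemma aux_sq (z c : ℂ) (s t : ℝ) (ht0 : 0 < t) (hs0 : 0 ≤ s)
    (h1 : ‖z - c‖ ≤ s * ‖c‖) :
    ‖z - (t : ℂ) * c‖ ^ 2 ≤ (1 - t) * ‖z‖ ^ 2 - t * (1 - s ^ 2 - t) * ‖c‖ ^ 2 := by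
  have e1 : ‖z - c‖ ^ 2 ≤ s ^ 2 * ‖c‖ ^ 2 := by
    nlinarith [norm_nonneg (z - c), norm_nonneg c]
  have hn : ∀ w : ℂ, ‖w‖ ^ 2 = w.re ^ 2 + w.im ^ 2 := by
    intro w
    rw [Complex.sq_norm, Complex.normSq_apply]; ring
  rw [hn] at e1 ⊢
  rw [hn z, hn c] at *
  simp only [Complex.sub_re, Complex.sub_im, Complex.mul_re, Complex.mul_im,
    Complex.ofReal_re, Complex.ofReal_im] at *
  nlinarith [e1, ht0.le, mul_le_mul_of_nonneg_left e1 ht0.le]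

theorem stmt_9 (T : H →L[ℂ] H) (h : wBOrth T 1) :
    wBOrth 1 T := by
  intro lam
  by_cases hH : ∃ x : H, ‖x‖ = 1
  case neg =>
    have hempty : ∀ S : H →L[ℂ] H, numRad S = 0 := by
      intro S
      have hset : {r : ℝ | ∃ x : H, ‖x‖ = 1 ∧ r = ‖(inner ℂ x (S x) : ℂ)‖} = ∅ := by
        ext r
        simp only [Set.mem_setOf_eq, Set.mem_empty_iff_false, iff_false]
        rintro ⟨x, hx, -⟩
        exact hH ⟨x, hx⟩
      rw [numRad, hset, Real.sSup_empty]
    rw [hempty, hempty]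
  case pos =>
  obtain ⟨e, he⟩ := hH
  have hself : ∀ x : H, ‖x‖ = 1 → (inner ℂ x x : ℂ) = 1 := by
    intro x hx
    rw [inner_self_eq_norm_sq_to_K, hx]
    norm_num
  have h1le : numRad (1 : H →L[ℂ] H) ≤ 1 := by
    have hmem : (1 : ℝ) ∈ {r : ℝ | ∃ x : H, ‖x‖ = 1 ∧ r = ‖(inner ℂ x ((1 : H →L[ℂ] H) x) : ℂ)‖} :=
      ⟨e, he, by simp [hself e he, he]⟩
    refine csSup_le ⟨1, hmem⟩ ?_
    rintro r ⟨x, hx, rfl⟩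
    simp [hself x hx, hx]
  refine le_trans h1le ?_
  by_contra hcon
  push_neg at hcon
  set s := numRad (1 + lam • T) with hs
  have key : ∀ x : H, ‖x‖ = 1 → ‖1 + lam * (inner ℂ x (T x) : ℂ)‖ ≤ s := by
    intro x hx
    have hz : (inner ℂ x ((1 + lam • T) x) : ℂ) = 1 + lam * (inner ℂ x (T x) : ℂ) := by
      simp [ContinuousLinearMap.add_apply, inner_add_right, inner_smul_right, hself x hx, hx]
    have := le_numRad (1 + lam • T) hx
    rwa [hz] at this
  have hs0 : 0 ≤ s := le_trans (norm_nonneg _) (key e he)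
  by_cases hlam : lam = 0
  · have := key e he
    simp [hlam] at this
    linarith
  · set R := numRad T with hR
    have hRz : ∀ x : H, ‖x‖ = 1 → ‖(inner ℂ x (T x) : ℂ)‖ ≤ R := fun x hx => le_numRad T hx
    have hR0 : 0 ≤ R := le_trans (norm_nonneg _) (hRz e he)
    by_cases hRe : R = 0
    · have hze : ‖(inner ℂ e (T e) : ℂ)‖ ≤ 0 := hRe ▸ hRz e he
      have hz0 : (inner ℂ e (T e) : ℂ) = 0 := by
        simpa using le_antisymm hze (norm_nonneg _)
      have hk := key e he
      rw [hz0, mul_zero, add_zero, norm_one] at hk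
      linarith
    · have hRpos : 0 < R := lt_of_le_of_ne hR0 (Ne.symm hRe)
      set c : ℂ := -lam⁻¹ with hc
      have hcpos : 0 < ‖c‖ := by
        simp [hc, norm_pos_iff, hlam]
      set t : ℝ := (1 - s ^ 2) / 2 with htdef
      have hs1 : s ^ 2 < 1 := by nlinarith
      have ht0 : 0 < t := by simp only [htdef]; linarith
      have ht1 : t < 1 := by simp only [htdef]; nlinarith
      set lam' : ℂ := (t : ℂ) / lam with hlam'
      have key2 : ∀ x : H, ‖x‖ = 1 →
          ‖(inner ℂ x ((T + lam' • 1) x) : ℂ)‖ ^ 2 ≤ (1 - t) * R ^ 2 - t * t * ‖c‖ ^ 2 := by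
        intro x hx
        set z : ℂ := inner ℂ x (T x) with hzdef
        have hzval : (inner ℂ x ((T + lam' • 1) x) : ℂ) = z - (t : ℂ) * c := by
          simp only [ContinuousLinearMap.add_apply, ContinuousLinearMap.smul_apply,
            ContinuousLinearMap.one_apply, inner_add_right, inner_smul_right, hself x hx,
            mul_one, ← hzdef, hlam', hc]
          field_simp
          ring
        have hdist : ‖z - c‖ ≤ s * ‖c‖ := by
          have hrw : z - c = lam⁻¹ * (1 + lam * z) := by
            rw [hc]
            field_simp
            ring
          have hnc : ‖(lam⁻¹ : ℂ)‖ = ‖c‖ := by simp [hc]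
          rw [hrw, norm_mul, hnc]
          calc ‖c‖ * ‖1 + lam * z‖ ≤ ‖c‖ * s := by
                gcongr
                exact key x hx
            _ = s * ‖c‖ := mul_comm _ _
        have haux := aux_sq z c s t ht0 hs0 hdist
        have hzR : ‖z‖ ≤ R := hRz x hx
        have h1s : 1 - s ^ 2 - t = t := by rw [htdef]; ring
        rw [h1s] at haux
        rw [hzval]
        nlinarith [norm_nonneg z, haux, mul_le_mul hzR hzR (norm_nonneg z) hR0, ht1]
      have hub : numRad (T + lam' • 1) ≤ Real.sqrt ((1 - t) * R ^ 2 - t * t * ‖c‖ ^ 2) := by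
        refine csSup_le ⟨‖(inner ℂ e ((T + lam' • 1) e) : ℂ)‖, e, he, rfl⟩ ?_
        rintro r ⟨x, hx, rfl⟩
        exact Real.le_sqrt_of_sq_le (key2 x hx)
      have hlt : Real.sqrt ((1 - t) * R ^ 2 - t * t * ‖c‖ ^ 2) < R := by
        rw [Real.sqrt_lt' hRpos]
        nlinarith [mul_pos (mul_pos ht0 ht0) (mul_pos hcpos hcpos), sq_nonneg R]
      have hhyp := h lam'
      rw [← hR] at hhyp
      linarith
end

section
/- If T, S ∈ B(H) satisfy M*_{ω(T)} = M*_{ω(S)}, then T ⊥_{ωB} S if and only if S ⊥_{ωB} T. -/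
open Filter Topology ComplexOrder

variable {H : Type*} [NormedAddCommGroup H] [InnerProductSpace ℂ H] [CompleteSpace H]

lemma numRad_eq (A : H →L[ℂ] H) :
    numRad A = sSup {r : ℝ | ∃ x : H, ‖x‖ = 1 ∧ r = ‖(inner ℂ x (A x) : ℂ)‖} := rfl

lemma numRad_bddAbove (A : H →L[ℂ] H) :
    BddAbove {r : ℝ | ∃ x : H, ‖x‖ = 1 ∧ r = ‖(inner ℂ x (A x) : ℂ)‖} := by
  refine ⟨‖A‖, ?_⟩
  rintro r ⟨x, hx, rfl⟩
  calc ‖(inner ℂ x (A x) : ℂ)‖ ≤ ‖x‖ * ‖A x‖ := norm_inner_le_norm _ _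
    _ ≤ ‖x‖ * (‖A‖ * ‖x‖) := by
        have := A.le_opNorm x
        exact mul_le_mul_of_nonneg_left this (norm_nonneg x)
    _ = ‖A‖ := by rw [hx]; ring

lemma inner_le_numRad (A : H →L[ℂ] H) {x : H} (hx : ‖x‖ = 1) :
    ‖(inner ℂ x (A x) : ℂ)‖ ≤ numRad A := by
  rw [numRad_eq]
  exact le_csSup (numRad_bddAbove A) ⟨x, hx, rfl⟩

lemma cnorm_add_sq (z w : ℂ) :
    ‖z + w‖ ^ 2 = ‖z‖ ^ 2 + 2 * ((starRingEnd ℂ z) * w).re + ‖w‖ ^ 2 := by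
  rw [Complex.sq_norm, Complex.sq_norm, Complex.sq_norm]
  simp [Complex.normSq_apply, Complex.add_re, Complex.add_im, Complex.mul_re, Complex.mul_im]
  ring

set_option maxHeartbeats 1000000 in
lemma wBOrth_symm_aux (T S : H →L[ℂ] H)
    (hM : ∀ x : ℕ → H, (∀ n, ‖x n‖ = 1) →
      (Tendsto (fun n => ‖(inner ℂ (x n) (T (x n)) : ℂ)‖) atTop (𝓝 (numRad T)) ↔
        Tendsto (fun n => ‖(inner ℂ (x n) (S (x n)) : ℂ)‖) atTop (𝓝 (numRad S))))
    (hTS : wBOrth T S) : wBOrth S T := by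
  intro μ
  by_cases hH : ∃ x : H, ‖x‖ = 1
  · obtain ⟨x₀, hx₀⟩ := hH
    set w := numRad T with hw
    set s := numRad S with hs
    set M := ‖μ‖ with hMdef
    have M0 : 0 ≤ M := norm_nonneg μ
    have w0 : (0:ℝ) ≤ w := le_trans (norm_nonneg _) (inner_le_numRad T hx₀)
    have s0 : (0:ℝ) ≤ s := le_trans (norm_nonneg _) (inner_le_numRad S hx₀)
    set t : ℕ → ℝ := fun n => ((n : ℝ) + 1)⁻¹ with htdef
    have ht_pos : ∀ n, 0 < t n := fun n => by positivity
    have ht0 : Tendsto t atTop (𝓝 0) := by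
      simpa [htdef, one_div] using tendsto_one_div_add_atTop_nhds_zero_nat (𝕜 := ℝ)
    -- choose an approximating sequence for ω(T + tₙ μ̄ S)
    have hex : ∀ n : ℕ, ∃ y : H, ‖y‖ = 1 ∧
        w - (t n) ^ 2 < ‖(inner ℂ y ((T + ((t n : ℂ) * starRingEnd ℂ μ) • S) y) : ℂ)‖ := by
      intro n
      set A := T + ((t n : ℂ) * starRingEnd ℂ μ) • S with hA
      have h1 : w ≤ numRad A := hTS _
      have h2 : w - (t n) ^ 2 < numRad A := by nlinarith [ht_pos n, sq_nonneg (t n)]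
      rw [numRad_eq] at h2
      have hne : Set.Nonempty {r : ℝ | ∃ x : H, ‖x‖ = 1 ∧ r = ‖(inner ℂ x (A x) : ℂ)‖} :=
        ⟨_, ⟨x₀, hx₀, rfl⟩⟩
      obtain ⟨r, ⟨y, hy, rfl⟩, hr⟩ := exists_lt_of_lt_csSup hne h2
      exact ⟨y, hy, hr⟩
    choose x hx1 hx2 using hex
    set a : ℕ → ℂ := fun n => inner ℂ (x n) (T (x n)) with ha
    set b : ℕ → ℂ := fun n => inner ℂ (x n) (S (x n)) with hb
    have hab : ∀ n, (inner ℂ (x n) ((T + ((t n : ℂ) * starRingEnd ℂ μ) • S) (x n)) : ℂ)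
        = a n + (t n : ℂ) * starRingEnd ℂ μ * b n := by
      intro n
      simp [ha, hb, inner_add_right, inner_smul_right, ContinuousLinearMap.add_apply,
        ContinuousLinearMap.smul_apply, mul_assoc]
    have ha_le : ∀ n, ‖a n‖ ≤ w := fun n => inner_le_numRad T (hx1 n)
    have hb_le : ∀ n, ‖b n‖ ≤ s := fun n => inner_le_numRad S (hx1 n)
    have hlam : ∀ n, ‖(t n : ℂ) * starRingEnd ℂ μ‖ = t n * M := by
      intro n
      rw [norm_mul, Complex.norm_real, RCLike.norm_conj, Real.norm_eq_abs,
        abs_of_pos (ht_pos n)]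
    have hN : ∀ n, w - (t n) ^ 2 < ‖a n + (t n : ℂ) * starRingEnd ℂ μ * b n‖ := by
      intro n
      have := hx2 n
      rwa [hab n] at this
    have hlb : ∀ n, ‖(t n : ℂ) * starRingEnd ℂ μ * b n‖ = t n * M * ‖b n‖ := by
      intro n; rw [norm_mul, hlam]
    have ha_lb : ∀ n, w - (t n) ^ 2 - t n * M * s ≤ ‖a n‖ := by
      intro n
      have h1 := (hN n).le
      have h2 : ‖a n + (t n : ℂ) * starRingEnd ℂ μ * b n‖ ≤ ‖a n‖ + t n * M * ‖b n‖ := by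
        calc ‖a n + (t n : ℂ) * starRingEnd ℂ μ * b n‖
            ≤ ‖a n‖ + ‖(t n : ℂ) * starRingEnd ℂ μ * b n‖ := norm_add_le _ _
          _ = ‖a n‖ + t n * M * ‖b n‖ := by rw [hlb]
      have h3 : t n * M * ‖b n‖ ≤ t n * M * s :=
        mul_le_mul_of_nonneg_left (hb_le n) (by positivity)
      linarith
    have haw : Tendsto (fun n => ‖a n‖) atTop (𝓝 w) := by
      refine tendsto_of_tendsto_of_tendsto_of_le_of_le ?_ tendsto_const_nhds ha_lb ha_le
      have h : Tendsto (fun n => w - (t n) ^ 2 - t n * M * s) atTop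
          (𝓝 (w - 0 ^ 2 - 0 * M * s)) :=
        (tendsto_const_nhds.sub (ht0.pow 2)).sub ((ht0.mul_const M).mul_const s)
      simpa using h
    have hbs : Tendsto (fun n => ‖b n‖) atTop (𝓝 s) := (hM x hx1).mp haw
    set R := numRad (S + μ • T) with hR
    have hRb : ∀ n, ‖b n + μ * a n‖ ≤ R := by
      intro n
      have hinner : (inner ℂ (x n) ((S + μ • T) (x n)) : ℂ) = b n + μ * a n := by
        simp [ha, hb, inner_add_right, inner_smul_right, ContinuousLinearMap.add_apply,
          ContinuousLinearMap.smul_apply]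
      rw [← hinner]
      exact inner_le_numRad _ (hx1 n)
    have hR0 : (0:ℝ) ≤ R := le_trans (norm_nonneg _) (hRb 0)
    set C : ℝ := 2 * w + M ^ 2 * s ^ 2 with hC
    have hC0 : (0:ℝ) ≤ C := by positivity
    -- key eventual inequality
    have hEv : ∀ᶠ n in atTop, ‖b n‖ ^ 2 - t n * C ≤ R ^ 2 := by
      -- expansions
      have heq2 : ∀ n, ‖b n + μ * a n‖ ^ 2
          = ‖b n‖ ^ 2 + 2 * ((starRingEnd ℂ (μ * a n)) * b n).re + M ^ 2 * ‖a n‖ ^ 2 := by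
        intro n
        rw [cnorm_add_sq]
        have h1 : ((starRingEnd ℂ (b n)) * (μ * a n)).re
            = ((starRingEnd ℂ (μ * a n)) * b n).re := by
          rw [← Complex.conj_re ((starRingEnd ℂ (b n)) * (μ * a n))]
          congr 1
          simp [map_mul, mul_comm, mul_left_comm]
        have h2 : ‖μ * a n‖ ^ 2 = M ^ 2 * ‖a n‖ ^ 2 := by
          rw [norm_mul]; ring
        rw [h1, h2]
      by_cases hwz : w = 0
      · refine Eventually.of_forall fun n => ?_
        have han : a n = 0 := by
          have := ha_le n
          rw [hwz] at this
          exact norm_le_zero_iff.mp this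
        have h4 : ‖b n + μ * a n‖ ^ 2 ≤ R ^ 2 :=
          pow_le_pow_left₀ (norm_nonneg _) (hRb n) 2
        rw [heq2 n, han] at h4
        simp only [mul_zero, map_zero, zero_mul, norm_zero, Complex.zero_re] at h4
        have hnC : 0 ≤ t n * C := mul_nonneg (ht_pos n).le hC0
        nlinarith [h4, hnC]
      · have hwpos : 0 < w := lt_of_le_of_ne w0 (Ne.symm hwz)
        have htsq : Tendsto (fun n => (t n) ^ 2) atTop (𝓝 0) := by
          have := (ht0.pow 2)
          simpa using this
        filter_upwards [htsq.eventually_le_const hwpos] with n htn2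
        -- notation
        set A' := ‖a n‖ with hA'
        set B' := ‖b n‖ with hB'
        set γ : ℝ := ((starRingEnd ℂ (μ * a n)) * b n).re with hγ
        have heq1 : ‖a n + (t n : ℂ) * starRingEnd ℂ μ * b n‖ ^ 2
            = A' ^ 2 + 2 * (t n * γ) + (t n * M * B') ^ 2 := by
          rw [cnorm_add_sq]
          have h1 : ((starRingEnd ℂ (a n)) * ((t n : ℂ) * starRingEnd ℂ μ * b n)).re
              = t n * γ := by
            have : (starRingEnd ℂ (a n)) * ((t n : ℂ) * starRingEnd ℂ μ * b n)
                = (t n : ℂ) * ((starRingEnd ℂ (μ * a n)) * b n) := by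
              simp [map_mul]; ring
            rw [this, Complex.re_ofReal_mul]
          rw [h1, hlb n]
        -- bound on the cross term
        have hNpos : (0:ℝ) ≤ ‖a n + (t n : ℂ) * starRingEnd ℂ μ * b n‖ := norm_nonneg _
        have h1 : (w - (t n) ^ 2) ^ 2 ≤ ‖a n + (t n : ℂ) * starRingEnd ℂ μ * b n‖ ^ 2 :=
          pow_le_pow_left₀ (by linarith) (hN n).le 2
        have hA2 : A' ^ 2 ≤ w ^ 2 := pow_le_pow_left₀ (norm_nonneg _) (ha_le n) 2
        have hB2 : (t n * M * B') ^ 2 ≤ (t n * M * s) ^ 2 :=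
          pow_le_pow_left₀ (by positivity) (mul_le_mul_of_nonneg_left (hb_le n) (by positivity)) 2
        have h2 : (w - (t n) ^ 2) ^ 2 - w ^ 2 - (t n * M * s) ^ 2 ≤ 2 * (t n * γ) := by
          rw [heq1] at h1
          linarith
        have h3 : 0 ≤ 2 * γ + t n * C := by
          have key : t n * 0 ≤ t n * (2 * γ + t n * C) := by
            nlinarith [sq_nonneg (t n), sq_nonneg ((t n) ^ 2)]
          exact le_of_mul_le_mul_left key (ht_pos n)
        have h4 : ‖b n + μ * a n‖ ^ 2 ≤ R ^ 2 :=
          pow_le_pow_left₀ (norm_nonneg _) (hRb n) 2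
        rw [heq2 n] at h4
        nlinarith [sq_nonneg (M * A')]
    have hlim : Tendsto (fun n => ‖b n‖ ^ 2 - t n * C) atTop (𝓝 (s ^ 2)) := by
      have h : Tendsto (fun n => ‖b n‖ ^ 2 - t n * C) atTop (𝓝 (s ^ 2 - 0 * C)) :=
        (hbs.pow 2).sub (ht0.mul_const C)
      have h0 : s ^ 2 - 0 * C = s ^ 2 := by ring
      rwa [h0] at h
    have hfin : s ^ 2 ≤ R ^ 2 := le_of_tendsto hlim hEv
    show s ≤ R
    nlinarith [hfin, s0, hR0]
  · have hz : ∀ A : H →L[ℂ] H, numRad A = 0 := by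
      intro A
      have hempty : {r : ℝ | ∃ x : H, ‖x‖ = 1 ∧ r = ‖(inner ℂ x (A x) : ℂ)‖} = ∅ := by
        apply Set.eq_empty_iff_forall_notMem.mpr
        rintro r ⟨y, hy, -⟩
        exact hH ⟨y, hy⟩
      rw [numRad_eq, hempty, Real.sSup_empty]
    rw [hz, hz]

theorem stmt_11 (T S : H →L[ℂ] H)
    (hM : ∀ x : ℕ → H, (∀ n, ‖x n‖ = 1) →
      (Tendsto (fun n => ‖(inner ℂ (x n) (T (x n)) : ℂ)‖) atTop (𝓝 (numRad T)) ↔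
        Tendsto (fun n => ‖(inner ℂ (x n) (S (x n)) : ℂ)‖) atTop (𝓝 (numRad S)))) :
    wBOrth T S ↔ wBOrth S T :=
  ⟨wBOrth_symm_aux T S hM, wBOrth_symm_aux S T (fun x hx => (hM x hx).symm)⟩
end
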